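/- Let α > 1, σ > 0, θ > 0 and define G(β) = α − exp(−σ²β²/θ²) − (2ασ²/θ²) β tan(β/2) on (0, π). Then G is strictly decreasing on (0, π), G(0⁺) = α − 1 > 0, G(β) → −∞ as β → π⁻, and G has a unique zero in (0, π). -/

import Mathlib

open Real Set

/-- For `0 < a < b < π/2`, `b - a ≤ tan b - tan a`. -/
lemma tan_sub_ge {a b : ℝ} (ha : 0 < a) (hab : a < b) (hb : b < π / 2) :
    b - a ≤ Real.tan b - Real.tan a := by
  have hca : 0 < Real.cos a :=
    Real.cos_pos_of_mem_Ioo ⟨by linarith [Real.pi_pos], by linarith⟩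
  have hcb : 0 < Real.cos b :=
    Real.cos_pos_of_mem_Ioo ⟨by linarith [Real.pi_pos], hb⟩
  have hd : 0 < b - a := by linarith
  have hd2 : b - a < π / 2 := by linarith
  have h1 : (b - a) < Real.tan (b - a) := Real.lt_tan hd hd2
  have hcd : 0 < Real.cos (b - a) :=
    Real.cos_pos_of_mem_Ioo ⟨by linarith [Real.pi_pos], hd2⟩
  have h2 : (b - a) * Real.cos (b - a) ≤ Real.sin (b - a) := by
    have := h1
    rw [Real.tan_eq_sin_div_cos] at this
    calc (b - a) * Real.cos (b - a)
        ≤ (Real.sin (b - a) / Real.cos (b - a)) * Real.cos (b - a) := by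
          apply mul_le_mul_of_nonneg_right this.le hcd.le
      _ = Real.sin (b - a) := by field_simp
  have h3 : Real.cos a * Real.cos b ≤ Real.cos (b - a) := by
    rw [Real.cos_sub]
    have hsa : 0 ≤ Real.sin a := Real.sin_nonneg_of_nonneg_of_le_pi ha.le (by linarith [Real.pi_pos])
    have hsb : 0 ≤ Real.sin b := Real.sin_nonneg_of_nonneg_of_le_pi (by linarith) (by linarith [Real.pi_pos])
    nlinarith
  have h4 : (b - a) * (Real.cos a * Real.cos b) ≤ Real.sin (b - a) := by
    calc (b - a) * (Real.cos a * Real.cos b) ≤ (b - a) * Real.cos (b - a) := by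
          apply mul_le_mul_of_nonneg_left h3 hd.le
      _ ≤ Real.sin (b - a) := h2
  rw [Real.sin_sub] at h4
  rw [Real.tan_eq_sin_div_cos, Real.tan_eq_sin_div_cos]
  rw [div_sub_div _ _ hcb.ne' hca.ne', le_div_iff₀ (by positivity)]
  nlinarith

/-- Key monotonicity estimate: for `0 < a < b < π`,
`(b^2 - a^2)/2 ≤ b * tan (b/2) - a * tan (a/2)`. -/
lemma key_tan (a b : ℝ) (ha : 0 < a) (hab : a < b) (hb : b < π) :
    (b ^ 2 - a ^ 2) / 2 ≤ b * Real.tan (b / 2) - a * Real.tan (a / 2) := by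
  have ha2 : 0 < a / 2 := by linarith
  have hab2 : a / 2 < b / 2 := by linarith
  have hb2 : b / 2 < π / 2 := by linarith
  -- x (tan x - x) is monotone via: both factors nonneg monotone
  have hta : a / 2 ≤ Real.tan (a / 2) := (Real.lt_tan ha2 (by linarith)).le
  have htb : b / 2 ≤ Real.tan (b / 2) := (Real.lt_tan (by linarith) hb2).le
  have hmono : Real.tan (a / 2) - a / 2 ≤ Real.tan (b / 2) - b / 2 := by
    have := tan_sub_ge ha2 hab2 hb2
    linarith
  -- a/2 * (tan(a/2) - a/2) ≤ b/2 * (tan(b/2) - b/2)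
  have hprod : a / 2 * (Real.tan (a / 2) - a / 2) ≤ b / 2 * (Real.tan (b / 2) - b / 2) := by
    apply mul_le_mul (by linarith) hmono (by linarith) (by linarith)
  nlinarith

/-- exp is 1-Lipschitz decreasing-side bound on nonpositive reals:
for `y ≤ x ≤ 0`, `exp x - exp y ≤ x - y`. -/
lemma exp_sub_le {x y : ℝ} (hyx : y ≤ x) (hx : x ≤ 0) :
    Real.exp x - Real.exp y ≤ x - y := by
  have h1 : Real.exp x - Real.exp y = Real.exp x * (1 - Real.exp (y - x)) := by
    rw [mul_sub, mul_one, ← Real.exp_add]; ring_nf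
  have h2 : 1 - Real.exp (y - x) ≤ x - y := by
    have := Real.add_one_le_exp (y - x); linarith
  have h3 : 0 ≤ 1 - Real.exp (y - x) := by
    have : Real.exp (y - x) ≤ 1 := Real.exp_le_one_iff.mpr (by linarith)
    linarith
  have h4 : Real.exp x ≤ 1 := Real.exp_le_one_iff.mpr hx
  rw [h1]
  calc Real.exp x * (1 - Real.exp (y - x)) ≤ 1 * (1 - Real.exp (y - x)) :=
        mul_le_mul_of_nonneg_right h4 h3
    _ = 1 - Real.exp (y - x) := one_mul _
    _ ≤ x - y := h2

theorem stmt9 (α σ θ : ℝ) (hα : 1 < α) (hσ : 0 < σ) (hθ : 0 < θ)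
    (G : ℝ → ℝ)
    (hG : ∀ β, G β = α - Real.exp (-(σ^2 * β^2) / θ^2) - (2 * α * σ^2 / θ^2) * β * Real.tan (β / 2)) :
    StrictAntiOn G (Ioo 0 π) ∧
    Filter.Tendsto G (nhdsWithin 0 (Ioi 0)) (nhds (α - 1)) ∧
    0 < α - 1 ∧
    Filter.Tendsto G (nhdsWithin π (Iio π)) Filter.atBot ∧
    ∃! β, β ∈ Ioo 0 π ∧ G β = 0 := by
  set c : ℝ := σ ^ 2 / θ ^ 2 with hc
  have hcpos : 0 < c := by positivity
  -- Strict antitonicity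
  have hanti : StrictAntiOn G (Ioo 0 π) := by
    intro a ha b hb hab
    rw [hG a, hG b]
    have hexp : Real.exp (-(σ^2 * a^2) / θ^2) - Real.exp (-(σ^2 * b^2) / θ^2)
        ≤ c * b ^ 2 - c * a ^ 2 := by
      have hab2 : σ ^ 2 * a ^ 2 ≤ σ ^ 2 * b ^ 2 := by
        apply mul_le_mul_of_nonneg_left _ (sq_nonneg σ)
        nlinarith [ha.1]
      have h := exp_sub_le (x := -(σ^2 * a^2) / θ^2) (y := -(σ^2 * b^2) / θ^2)
        (by apply div_le_div_of_nonneg_right _ (by positivity) |>.trans_eq rfl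
            linarith) (by
          apply div_nonpos_of_nonpos_of_nonneg _ (by positivity : (0:ℝ) ≤ θ ^ 2)
          nlinarith [ha.1])
      have heq : -(σ^2 * a^2) / θ^2 - -(σ^2 * b^2) / θ^2 = c * b ^ 2 - c * a ^ 2 := by
        rw [hc]; ring
      linarith [h, heq.le, heq.ge]
    have htan := key_tan a b ha.1 hab hb.2
    have hα2 : (0:ℝ) < 2 * α * σ ^ 2 / θ ^ 2 := by positivity
    have hcoef : 2 * α * σ ^ 2 / θ ^ 2 = 2 * α * c := by rw [hc]; ring
    have hmul : 2 * α * c * ((b ^ 2 - a ^ 2) / 2) ≤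
        2 * α * c * (b * Real.tan (b / 2) - a * Real.tan (a / 2)) := by
      apply mul_le_mul_of_nonneg_left htan (by positivity)
    have hstrict : c * (b ^ 2 - a ^ 2) < α * c * (b ^ 2 - a ^ 2) := by
      have hpos2 : 0 < b ^ 2 - a ^ 2 := by nlinarith [ha.1]
      have hca : c < α * c := by nlinarith
      exact mul_lt_mul_of_pos_right hca hpos2
    rw [hcoef]
    nlinarith [hmul, hexp, hstrict]
  -- Tendsto at 0+
  have hcont0 : ContinuousAt (fun β : ℝ => α - Real.exp (-(σ^2 * β^2) / θ^2)
      - (2 * α * σ^2 / θ^2) * β * Real.tan (β / 2)) 0 := by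
    apply ContinuousAt.sub
    · apply ContinuousAt.sub continuousAt_const
      apply Real.continuous_exp.continuousAt.comp
      fun_prop
    · apply ContinuousAt.mul (by fun_prop)
      have hcos : Real.cos ((0:ℝ) / 2) ≠ 0 := by norm_num
      have ht : ContinuousAt Real.tan ((0:ℝ) / 2) := Real.continuousAt_tan.mpr hcos
      have hdiv : ContinuousAt (fun β : ℝ => β / 2) 0 := continuousAt_id.div_const 2
      have := ContinuousAt.comp (g := Real.tan) (f := fun β : ℝ => β / 2) (x := (0:ℝ)) ht hdiv
      exact this
  have hGeq : G = fun β : ℝ => α - Real.exp (-(σ^2 * β^2) / θ^2)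
      - (2 * α * σ^2 / θ^2) * β * Real.tan (β / 2) := funext hG
  have hval : (fun β : ℝ => α - Real.exp (-(σ^2 * β^2) / θ^2)
      - (2 * α * σ^2 / θ^2) * β * Real.tan (β / 2)) 0 = α - 1 := by
    simp
  have htend0 : Filter.Tendsto G (nhdsWithin 0 (Ioi 0)) (nhds (α - 1)) := by
    rw [hGeq]
    have h := hcont0.continuousWithinAt (s := Ioi (0:ℝ))
    rw [ContinuousWithinAt] at h
    simpa using h
  -- Tendsto at π-
  have htendπ : Filter.Tendsto G (nhdsWithin π (Iio π)) Filter.atBot := by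
    rw [hGeq]
    have h1 : Filter.Tendsto (fun β : ℝ => α - Real.exp (-(σ^2 * β^2) / θ^2))
        (nhdsWithin π (Iio π)) (nhds (α - Real.exp (-(σ^2 * π^2) / θ^2))) := by
      apply Filter.Tendsto.mono_left _ nhdsWithin_le_nhds
      apply ContinuousAt.tendsto
      apply ContinuousAt.sub continuousAt_const
      apply Real.continuous_exp.continuousAt.comp
      fun_prop
    have h2 : Filter.Tendsto (fun β : ℝ => β / 2) (nhdsWithin π (Iio π))
        (nhdsWithin (π / 2) (Iio (π / 2))) := by
      apply Filter.Tendsto.inf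
      · exact (continuousAt_id.div_const 2).tendsto
      · apply Filter.tendsto_principal_principal.mpr
        intro x hx
        simp only [mem_Iio] at hx ⊢
        linarith
    have h3 : Filter.Tendsto (fun β : ℝ => Real.tan (β / 2)) (nhdsWithin π (Iio π))
        Filter.atTop := Real.tendsto_tan_pi_div_two.comp h2
    have hconst : Filter.Tendsto (fun β : ℝ => (2 * α * σ^2 / θ^2) * β)
        (nhdsWithin π (Iio π)) (nhds ((2 * α * σ^2 / θ^2) * π)) := by
      apply Filter.Tendsto.mono_left _ nhdsWithin_le_nhds
      exact ((continuous_const.mul continuous_id).tendsto π)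
    have h4 : Filter.Tendsto (fun β : ℝ => (2 * α * σ^2 / θ^2) * β * Real.tan (β / 2))
        (nhdsWithin π (Iio π)) Filter.atTop :=
      Filter.Tendsto.pos_mul_atTop (by positivity) hconst h3
    have h5 : Filter.Tendsto (fun β : ℝ => -((2 * α * σ^2 / θ^2) * β * Real.tan (β / 2)))
        (nhdsWithin π (Iio π)) Filter.atBot := Filter.tendsto_neg_atBot_iff.mpr h4
    have h6 := h1.add_atBot h5
    simpa [sub_eq_add_neg] using h6
  -- existence of zero
  have hpos : ∀ᶠ β in nhdsWithin 0 (Ioi 0), 0 < G β :=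
    htend0.eventually (eventually_gt_nhds (by linarith))
  have hsmall : ∀ᶠ β in nhdsWithin 0 (Ioi 0), β ∈ Ioo (0:ℝ) (π/2) :=
    Ioo_mem_nhdsGT_of_mem ⟨le_refl 0, by positivity⟩
  obtain ⟨a, haG, ha⟩ := (hpos.and hsmall).exists
  have hneg : ∀ᶠ β in nhdsWithin π (Iio π), G β < 0 :=
    htendπ.eventually (Filter.eventually_lt_atBot 0)
  have hbig : ∀ᶠ β in nhdsWithin π (Iio π), β ∈ Ioo (π/2) π :=
    Ioo_mem_nhdsLT_of_mem ⟨by linarith [Real.pi_pos], le_refl π⟩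
  obtain ⟨b, hbG, hb⟩ := (hneg.and hbig).exists
  have hab : a < b := lt_trans ha.2 hb.1
  have hsub : Icc a b ⊆ Ioo 0 π := fun x hx => ⟨lt_of_lt_of_le ha.1 hx.1, lt_of_le_of_lt hx.2 hb.2⟩
  have hcontOn : ContinuousOn G (Icc a b) := by
    rw [hGeq]
    intro x hx
    apply ContinuousAt.continuousWithinAt
    have hx' := hsub hx
    apply ContinuousAt.sub
    · apply ContinuousAt.sub continuousAt_const
      apply Real.continuous_exp.continuousAt.comp
      fun_prop
    · apply ContinuousAt.mul (by fun_prop)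
      have hcos : Real.cos (x / 2) ≠ 0 := by
        have : 0 < Real.cos (x / 2) :=
          Real.cos_pos_of_mem_Ioo ⟨by linarith [hx'.1, Real.pi_pos], by linarith [hx'.2]⟩
        exact this.ne'
      have ht : ContinuousAt Real.tan (x / 2) := Real.continuousAt_tan.mpr hcos
      have hdiv : ContinuousAt (fun β : ℝ => β / 2) x := continuousAt_id.div_const 2
      have := ContinuousAt.comp (g := Real.tan) (f := fun β : ℝ => β / 2) (x := x) ht hdiv
      exact this
  have h0mem : (0:ℝ) ∈ Icc (G b) (G a) := ⟨hbG.le, haG.le⟩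
  obtain ⟨x, hxmem, hxval⟩ := intermediate_value_Icc' hab.le hcontOn h0mem
  have hxIoo : x ∈ Ioo 0 π := hsub hxmem
  refine ⟨hanti, htend0, by linarith, htendπ, x, ⟨hxIoo, hxval⟩, ?_⟩
  rintro y ⟨hy, hyval⟩
  by_contra hne
  rcases lt_or_gt_of_ne hne with h | h
  · have := hanti hy hxIoo h
    rw [hxval, hyval] at this; exact lt_irrefl 0 this
  · have := hanti hxIoo hy h
    rw [hxval, hyval] at this; exact lt_irrefl 0 this
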